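/- Let V, W, Z be finite-dimensional real vector spaces equipped with generalized complex structures, and let Γ ⊆ V ⊕ W and Φ ⊆ W ⊕ Z be subspaces. If Γ and Φ are generalized isotropic with respect to the twisted product structures on V ⊕ W and W ⊕ Z respectively, then the composition Φ∘Γ = {(v,z) ∈ V ⊕ Z : ∃ w ∈ W with (v,w) ∈ Γ and (w,z) ∈ Φ} is a generalized isotropic subspace of V ⊕ Z with respect to the twisted product structure. -/

import Mathlib

open Module LinearMap

noncomputable def gcPair (V : Type*) [AddCommGroup V] [Module ℝ V]
    (x y : V × Module.Dual ℝ V) : ℝ :=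
  -(1/2) * (x.2 y.1 + y.2 x.1)

noncomputable def IsGCS (V : Type*) [AddCommGroup V] [Module ℝ V]
    (J : (V × Module.Dual ℝ V) →ₗ[ℝ] (V × Module.Dual ℝ V)) : Prop :=
  J ∘ₗ J = -LinearMap.id ∧ ∀ x y, gcPair V (J x) (J y) = gcPair V x y

section Blocks

variable (V : Type*) [AddCommGroup V] [Module ℝ V]

noncomputable def blk1 (J : (V × Module.Dual ℝ V) →ₗ[ℝ] (V × Module.Dual ℝ V)) :
    V →ₗ[ℝ] V :=
  (LinearMap.fst ℝ V (Module.Dual ℝ V)) ∘ₗ J ∘ₗ (LinearMap.inl ℝ V (Module.Dual ℝ V))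

noncomputable def blk2 (J : (V × Module.Dual ℝ V) →ₗ[ℝ] (V × Module.Dual ℝ V)) :
    Module.Dual ℝ V →ₗ[ℝ] V :=
  (LinearMap.fst ℝ V (Module.Dual ℝ V)) ∘ₗ J ∘ₗ (LinearMap.inr ℝ V (Module.Dual ℝ V))

noncomputable def blk3 (J : (V × Module.Dual ℝ V) →ₗ[ℝ] (V × Module.Dual ℝ V)) :
    V →ₗ[ℝ] Module.Dual ℝ V :=
  (LinearMap.snd ℝ V (Module.Dual ℝ V)) ∘ₗ J ∘ₗ (LinearMap.inl ℝ V (Module.Dual ℝ V))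

noncomputable def blk4 (J : (V × Module.Dual ℝ V) →ₗ[ℝ] (V × Module.Dual ℝ V)) :
    Module.Dual ℝ V →ₗ[ℝ] Module.Dual ℝ V :=
  (LinearMap.snd ℝ V (Module.Dual ℝ V)) ∘ₗ J ∘ₗ (LinearMap.inr ℝ V (Module.Dual ℝ V))

noncomputable def ofBlocks (A : V →ₗ[ℝ] V) (B : Module.Dual ℝ V →ₗ[ℝ] V)
    (C : V →ₗ[ℝ] Module.Dual ℝ V) (D : Module.Dual ℝ V →ₗ[ℝ] Module.Dual ℝ V) :
    (V × Module.Dual ℝ V) →ₗ[ℝ] (V × Module.Dual ℝ V) :=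
  LinearMap.prod
    (A ∘ₗ LinearMap.fst ℝ V (Module.Dual ℝ V) + B ∘ₗ LinearMap.snd ℝ V (Module.Dual ℝ V))
    (C ∘ₗ LinearMap.fst ℝ V (Module.Dual ℝ V) + D ∘ₗ LinearMap.snd ℝ V (Module.Dual ℝ V))

/-- The twist `𝓙̃ = [[𝓙₁,-𝓙₂],[-𝓙₃,𝓙₄]]` of `𝓙`. -/
noncomputable def gcTwist (J : (V × Module.Dual ℝ V) →ₗ[ℝ] (V × Module.Dual ℝ V)) :
    (V × Module.Dual ℝ V) →ₗ[ℝ] (V × Module.Dual ℝ V) :=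
  ofBlocks V (blk1 V J) (-(blk2 V J)) (-(blk3 V J)) (blk4 V J)

end Blocks

section Prod

variable (U V : Type*) [AddCommGroup U] [Module ℝ U] [AddCommGroup V] [Module ℝ V]

/-- The natural identification `(U⊕V) ⊕ (U⊕V)* ≅ (U ⊕ U*) ⊕ (V ⊕ V*)`. -/
noncomputable def prodPack :
    ((U × V) × Module.Dual ℝ (U × V)) ≃ₗ[ℝ]
      (U × Module.Dual ℝ U) × (V × Module.Dual ℝ V) :=
  ((LinearEquiv.refl ℝ (U × V)).prodCongr (Module.dualProdDualEquivDual ℝ U V).symm).trans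
    (LinearEquiv.prodProdProdComm ℝ U V (Module.Dual ℝ U) (Module.Dual ℝ V))

/-- The direct sum of the structures `J_U` and `J_V` on `U ⊕ V`. -/
noncomputable def directSum
    (JU : (U × Module.Dual ℝ U) →ₗ[ℝ] (U × Module.Dual ℝ U))
    (JV : (V × Module.Dual ℝ V) →ₗ[ℝ] (V × Module.Dual ℝ V)) :
    ((U × V) × Module.Dual ℝ (U × V)) →ₗ[ℝ] ((U × V) × Module.Dual ℝ (U × V)) :=
  (prodPack U V).symm.toLinearMap ∘ₗ (LinearMap.prodMap JU JV) ∘ₗ (prodPack U V).toLinearMap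

/-- The twisted product structure on `U ⊕ V`: the direct sum of `𝓙̃_U` and `𝓙_V`. -/
noncomputable def twistedProd
    (JU : (U × Module.Dual ℝ U) →ₗ[ℝ] (U × Module.Dual ℝ U))
    (JV : (V × Module.Dual ℝ V) →ₗ[ℝ] (V × Module.Dual ℝ V)) :
    ((U × V) × Module.Dual ℝ (U × V)) →ₗ[ℝ] ((U × V) × Module.Dual ℝ (U × V)) :=
  directSum U V (gcTwist U JU) JV

end Prod

section Subspaces

variable {X : Type*} [AddCommGroup X] [Module ℝ X]

/-- A subspace `Γ` of a GC vector space `(X, J)` is generalized isotropic if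
`J(Γ ⊕ 0) ⊆ Γ ⊕ Ann(Γ)`. -/
def GenIsotropic (J : (X × Module.Dual ℝ X) →ₗ[ℝ] (X × Module.Dual ℝ X))
    (Γ : Submodule ℝ X) : Prop :=
  ∀ x ∈ Γ, J (x, 0) ∈ Γ.prod Γ.dualAnnihilator

/-- A subspace `Γ` of a GC vector space `(X, J)` is generalized coisotropic if
`J(0 ⊕ Ann(Γ)) ⊆ Γ ⊕ Ann(Γ)`. -/
def GenCoisotropic (J : (X × Module.Dual ℝ X) →ₗ[ℝ] (X × Module.Dual ℝ X))
    (Γ : Submodule ℝ X) : Prop :=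
  ∀ f ∈ Γ.dualAnnihilator, J (0, f) ∈ Γ.prod Γ.dualAnnihilator

/-- A subspace `Γ` of a GC vector space `(X, J)` is generalized Lagrangian if
`Γ ⊕ Ann(Γ)` is stable under `J`. -/
def GenLagrangian (J : (X × Module.Dual ℝ X) →ₗ[ℝ] (X × Module.Dual ℝ X))
    (Γ : Submodule ℝ X) : Prop :=
  ∀ p ∈ Γ.prod Γ.dualAnnihilator, J p ∈ Γ.prod Γ.dualAnnihilator

end Subspaces

section Comp

variable {V W Z : Type*} [AddCommGroup V] [Module ℝ V] [AddCommGroup W] [Module ℝ W]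
  [AddCommGroup Z] [Module ℝ Z]

/-- The composition `Φ∘Γ = {(v,z) : ∃ w, (v,w) ∈ Γ ∧ (w,z) ∈ Φ}` of linear relations. -/
def relComp (Γ : Submodule ℝ (V × W)) (Φ : Submodule ℝ (W × Z)) : Submodule ℝ (V × Z) where
  carrier := {p | ∃ w : W, (p.1, w) ∈ Γ ∧ (w, p.2) ∈ Φ}
  add_mem' := by
    rintro ⟨a, c⟩ ⟨a', c'⟩ ⟨w, h1, h2⟩ ⟨w', h1', h2'⟩
    exact ⟨w + w', Γ.add_mem h1 h1', Φ.add_mem h2 h2'⟩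
  zero_mem' := ⟨0, Γ.zero_mem, Φ.zero_mem⟩
  smul_mem' := by
    rintro r ⟨a, c⟩ ⟨w, h1, h2⟩
    exact ⟨r • w, Γ.smul_mem r h1, Φ.smul_mem r h2⟩

end Comp

lemma twistedProd_apply_isotropic (U V : Type*) [AddCommGroup U] [Module ℝ U]
    [AddCommGroup V] [Module ℝ V]
    (JU : (U × Module.Dual ℝ U) →ₗ[ℝ] (U × Module.Dual ℝ U))
    (JV : (V × Module.Dual ℝ V) →ₗ[ℝ] (V × Module.Dual ℝ V)) (u : U) (v : V) :
    twistedProd U V JU JV ((u, v), 0) =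
      (((JU (u, 0)).1, (JV (v, 0)).1),
        (-(JU (u, 0)).2).coprod ((JV (v, 0)).2)) := by
  simp [twistedProd, directSum, prodPack, gcTwist, ofBlocks, blk1, blk2, blk3, blk4,
    Module.dualProdDualEquivDual, LinearEquiv.prodCongr_symm,
    LinearEquiv.prodCongr_apply, LinearMap.coprodEquiv, Prod.mk_zero_zero]

theorem relComp_genIsotropic
    (V W Z : Type*) [AddCommGroup V] [Module ℝ V] [FiniteDimensional ℝ V]
    [AddCommGroup W] [Module ℝ W] [FiniteDimensional ℝ W]
    [AddCommGroup Z] [Module ℝ Z] [FiniteDimensional ℝ Z]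
    (JV : (V × Module.Dual ℝ V) →ₗ[ℝ] (V × Module.Dual ℝ V))
    (JW : (W × Module.Dual ℝ W) →ₗ[ℝ] (W × Module.Dual ℝ W))
    (JZ : (Z × Module.Dual ℝ Z) →ₗ[ℝ] (Z × Module.Dual ℝ Z))
    (hJV : IsGCS V JV) (hJW : IsGCS W JW) (hJZ : IsGCS Z JZ)
    (Γ : Submodule ℝ (V × W)) (Φ : Submodule ℝ (W × Z))
    (hΓ : GenIsotropic (twistedProd V W JV JW) Γ)
    (hΦ : GenIsotropic (twistedProd W Z JW JZ) Φ) :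
    GenIsotropic (twistedProd V Z JV JZ) (relComp Γ Φ) := by
  rintro ⟨v, z⟩ ⟨w, hvw, hwz⟩
  have h1 := hΓ (v, w) hvw
  have h2 := hΦ (w, z) hwz
  rw [twistedProd_apply_isotropic, Submodule.mem_prod] at h1 h2
  rw [twistedProd_apply_isotropic, Submodule.mem_prod]
  obtain ⟨h1a, h1b⟩ := h1
  obtain ⟨h2a, h2b⟩ := h2
  dsimp only at h1a h1b h2a h2b
  rw [Submodule.mem_dualAnnihilator] at h1b h2b
  refine ⟨⟨(JW (w, 0)).1, h1a, h2a⟩, ?_⟩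
  dsimp only
  rw [Submodule.mem_dualAnnihilator]
  rintro ⟨v', z'⟩ ⟨w', hv'w', hw'z'⟩
  have e1 := h1b (v', w') hv'w'
  have e2 := h2b (w', z') hw'z'
  simp only [LinearMap.coprod_apply, LinearMap.neg_apply] at e1 e2 ⊢
  linarith
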